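/- Let λ₁, λ₂ be positive real numbers with λ₁² + λ₂² = 1 and let R₁ ∈ (0, π]. Set c = λ₁² cos R₁ + λ₂². Then c ∈ (−1, 1), so R := arccos(c) ∈ (0, π) and sin R > 0; moreover sin²R = λ₁²(1 − cos R₁)(2 − λ₁²(1 − cos R₁)), and the numbers a₀ := λ₁λ₂(cos R₁ − 1)/sin R and a₁ := λ₁ sin R₁ / sin R satisfy a₀² + a₁² = 1. -/

import Mathlib

open Real

theorem stmt_8 (lam₁ lam₂ R₁ : ℝ)
    (hlam₁ : 0 < lam₁) (hlam₂ : 0 < lam₂) (hsum : lam₁ ^ 2 + lam₂ ^ 2 = 1)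
    (hR₁ : R₁ ∈ Set.Ioc 0 π) :
    lam₁ ^ 2 * Real.cos R₁ + lam₂ ^ 2 ∈ Set.Ioo (-1 : ℝ) 1 ∧
    Real.arccos (lam₁ ^ 2 * Real.cos R₁ + lam₂ ^ 2) ∈ Set.Ioo 0 π ∧
    0 < Real.sin (Real.arccos (lam₁ ^ 2 * Real.cos R₁ + lam₂ ^ 2)) ∧
    Real.sin (Real.arccos (lam₁ ^ 2 * Real.cos R₁ + lam₂ ^ 2)) ^ 2 =
      lam₁ ^ 2 * (1 - Real.cos R₁) * (2 - lam₁ ^ 2 * (1 - Real.cos R₁)) ∧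
    (lam₁ * lam₂ * (Real.cos R₁ - 1) /
        Real.sin (Real.arccos (lam₁ ^ 2 * Real.cos R₁ + lam₂ ^ 2))) ^ 2 +
      (lam₁ * Real.sin R₁ /
        Real.sin (Real.arccos (lam₁ ^ 2 * Real.cos R₁ + lam₂ ^ 2))) ^ 2 = 1 := by
  obtain ⟨hR₁0, hR₁π⟩ := hR₁
  set c := lam₁ ^ 2 * Real.cos R₁ + lam₂ ^ 2 with hc
  have hcos1 : Real.cos R₁ < 1 := by
    have := Real.cos_lt_cos_of_nonneg_of_le_pi le_rfl hR₁π hR₁0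
    simpa using this
  have hcosm1 : -1 ≤ Real.cos R₁ := Real.neg_one_le_cos R₁
  have h1 : lam₁ ^ 2 > 0 := by positivity
  have h2 : lam₂ ^ 2 > 0 := by positivity
  have hc1 : c < 1 := by
    have : lam₁ ^ 2 * Real.cos R₁ < lam₁ ^ 2 * 1 := by
      exact mul_lt_mul_of_pos_left hcos1 h1
    nlinarith
  have hcm1 : -1 < c := by nlinarith
  have hmem : c ∈ Set.Ioo (-1 : ℝ) 1 := ⟨hcm1, hc1⟩
  have harc : Real.arccos c ∈ Set.Ioo 0 π :=
    ⟨Real.arccos_pos.mpr hc1, lt_of_le_of_ne (Real.arccos_le_pi c) (fun h => by rw [Real.arccos_eq_pi] at h; linarith)⟩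
  have hsin : Real.sin (Real.arccos c) = Real.sqrt (1 - c ^ 2) :=
    Real.sin_arccos c
  have hsinpos : 0 < Real.sin (Real.arccos c) :=
    Real.sin_pos_of_pos_of_lt_pi harc.1 harc.2
  have hsq : Real.sin (Real.arccos c) ^ 2 = 1 - c ^ 2 := by
    rw [hsin, Real.sq_sqrt (by nlinarith)]
  have hsq2 : Real.sin (Real.arccos c) ^ 2 =
      lam₁ ^ 2 * (1 - Real.cos R₁) * (2 - lam₁ ^ 2 * (1 - Real.cos R₁)) := by
    rw [hsq]; nlinarith
  refine ⟨hmem, harc, hsinpos, hsq2, ?_⟩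
  have hsinR₁ : Real.sin R₁ ^ 2 = 1 - Real.cos R₁ ^ 2 := by
    nlinarith [Real.sin_sq_add_cos_sq R₁]
  rw [div_pow, div_pow, ← add_div, div_eq_one_iff_eq (by positivity)]
  rw [hsq, hc]
  linear_combination lam₁ ^ 2 * hsinR₁ + (lam₂ ^ 2 + lam₁ ^ 2 * Real.cos R₁ ^ 2 + 1) * hsum
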